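/- Let 𝔽 be a field with algebraic closure 𝔽̄, let P(λ) = P_kλ^k + ⋯ + P_1λ + P_0 ∈ 𝔽[λ]^{p×m} with k ≥ 2, let C₁(λ) be the Frobenius companion form of P(λ), and let λ₀ ∈ 𝔽̄. Then the linear map F_r : 𝒩_r(P(λ₀)) → 𝒩_r(C₁(λ₀)) defined by F_r(x) = [λ₀^{k−1}x; λ₀^{k−2}x; …; λ₀x; x] (i.e., x ↦ (Λ_{k−1}(λ₀) ⊗ I_m)x with Λ_{k−1}(λ) = [λ^{k−1}, λ^{k−2}, …, λ, 1]ᵀ) is a bijection between the right nullspaces over 𝔽̄ of P(λ₀) and of C₁(λ₀). -/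
import Mathlib


open Polynomial Matrix

/-- For the Frobenius companion form `C₁(λ)` of
`P(λ) = P_k λ^k + ⋯ + P_0` and any `λ₀` in the algebraic closure of `F`, the map
`x ↦ (Λ_{k-1}(λ₀) ⊗ I_m) x = [λ₀^{k-1} x; …; λ₀ x; x]` is a bijection between the right
nullspaces of `P(λ₀)` and `C₁(λ₀)`. -/
theorem stmt_8 {F : Type*} [Field F] {p m k : ℕ} (hk : 2 ≤ k)
    (Pc : ℕ → Matrix (Fin p) (Fin m) F)
    (P : Matrix (Fin p) (Fin m) (Polynomial F))
    (hP : P = ∑ i ∈ Finset.range (k+1),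
      ((Polynomial.X : Polynomial F) ^ i) • (Pc i).map Polynomial.C)
    -- the Frobenius companion form `C₁(λ)`
    (C1 : Matrix (Fin p ⊕ (Fin (k-1) × Fin m)) ((Fin (k-1) × Fin m) ⊕ Fin m) (Polynomial F))
    (hC1 : C1 = Matrix.fromBlocks
      (Matrix.of fun i c =>
        if (c.1 : ℕ) = 0 then
          Polynomial.X * Polynomial.C (Pc k i c.2) + Polynomial.C (Pc (k-1) i c.2)
        else Polynomial.C (Pc (k-1-(c.1 : ℕ)) i c.2))
      ((Pc 0).map Polynomial.C)
      (Matrix.of fun r c =>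
        if r.2 = c.2 then
          (if r.1 = c.1 then -1
           else if (c.1 : ℕ) = (r.1 : ℕ) + 1 then Polynomial.X else 0)
        else 0)
      (Matrix.of fun r j =>
        if (r.1 : ℕ) = k-2 ∧ r.2 = j then Polynomial.X else 0))
    (lam : AlgebraicClosure F) :
    Set.BijOn
      (fun x : Fin m → AlgebraicClosure F =>
        Sum.elim (fun rc : Fin (k-1) × Fin m => lam ^ (k-1-(rc.1 : ℕ)) * x rc.2) x)
      {x | (P.map (fun q => Polynomial.aeval lam q)).mulVec x = 0}
      {v | (C1.map (fun q => Polynomial.aeval lam q)).mulVec v = 0} := by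
  classical
  -- helper sum lemma for the bottom-left block
  have csum : ∀ (u : Fin (k-1) → AlgebraicClosure F) (a : Fin (k-1)),
      (∑ c1 : Fin (k-1), (if a = c1 then (-1 : AlgebraicClosure F)
        else if (c1 : ℕ) = (a : ℕ) + 1 then lam else 0) * u c1)
        = -u a + (if h : (a : ℕ) + 1 < k - 1 then lam * u ⟨(a : ℕ) + 1, h⟩ else 0) := by
    intro u a
    have split : ∀ c1 : Fin (k-1),
        (if a = c1 then (-1 : AlgebraicClosure F)
          else if (c1 : ℕ) = (a : ℕ) + 1 then lam else 0) * u c1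
        = (if a = c1 then (-1 : AlgebraicClosure F) else 0) * u c1
          + (if (c1 : ℕ) = (a : ℕ) + 1 then lam else 0) * u c1 := by
      intro c1
      by_cases h1 : a = c1
      · subst h1
        rw [if_pos rfl, if_pos rfl, if_neg (by omega)]
        ring
      · rw [if_neg h1, if_neg h1, zero_mul, zero_add]
    rw [Finset.sum_congr rfl (fun c1 _ => split c1), Finset.sum_add_distrib]
    congr 1
    · simp_rw [ite_mul, zero_mul]
      rw [Finset.sum_ite_eq]
      simp [neg_one_mul]
    · by_cases h : (a : ℕ) + 1 < k - 1
      · rw [dif_pos h]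
        rw [Finset.sum_eq_single (⟨(a : ℕ) + 1, h⟩ : Fin (k-1))]
        · simp
        · intro b _ hb
          rw [if_neg (fun hc => hb (Fin.ext hc)), zero_mul]
        · intro hmem
          exact absurd (Finset.mem_univ _) hmem
      · rw [dif_neg h]
        refine Finset.sum_eq_zero fun c1 _ => ?_
        have := c1.isLt
        rw [if_neg (by omega), zero_mul]
  -- bottom rows
  have bottomRow : ∀ (w : Fin (k-1) × Fin m → AlgebraicClosure F)
      (y : Fin m → AlgebraicClosure F) (r : Fin (k-1) × Fin m),
      ((C1.map (fun q => Polynomial.aeval lam q)).mulVec (Sum.elim w y)) (Sum.inr r)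
        = -(w r) + lam *
            (if h : (r.1 : ℕ) + 1 < k - 1 then w (⟨(r.1 : ℕ) + 1, h⟩, r.2) else y r.2) := by
    intro w y r
    rw [hC1, Matrix.fromBlocks_map, Matrix.fromBlocks_mulVec]
    simp only [Sum.elim_inr, Pi.add_apply, Sum.elim_comp_inl, Sum.elim_comp_inr]
    have hlt := r.1.isLt
    have hD : (((Matrix.of fun (r : Fin (k-1) × Fin m) (j : Fin m) =>
          if (r.1 : ℕ) = k-2 ∧ r.2 = j then (Polynomial.X : Polynomial F) else 0)).map
          (fun q => Polynomial.aeval lam q)).mulVec y r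
        = if (r.1 : ℕ) = k - 2 then lam * y r.2 else 0 := by
      simp only [Matrix.mulVec, dotProduct, Matrix.map_apply, Matrix.of_apply]
      by_cases h : (r.1 : ℕ) = k - 2
      · rw [if_pos h]
        simp only [h, true_and, apply_ite (Polynomial.aeval lam), aeval_X, map_zero,
          ite_mul, zero_mul]
        rw [Finset.sum_ite_eq]
        simp
      · rw [if_neg h]
        refine Finset.sum_eq_zero fun j _ => ?_
        rw [if_neg (by tauto), map_zero, zero_mul]
    have hC : (((Matrix.of fun (r c : Fin (k-1) × Fin m) =>
          if r.2 = c.2 then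
            (if r.1 = c.1 then (-1 : Polynomial F)
             else if (c.1 : ℕ) = (r.1 : ℕ) + 1 then Polynomial.X else 0)
          else 0)).map (fun q => Polynomial.aeval lam q)).mulVec w r
        = -(w r) + (if h : (r.1 : ℕ) + 1 < k - 1 then lam * w (⟨(r.1 : ℕ) + 1, h⟩, r.2)
            else 0) := by
      simp only [Matrix.mulVec, dotProduct, Matrix.map_apply, Matrix.of_apply]
      rw [Fintype.sum_prod_type]
      have step : ∀ c1 : Fin (k-1),
          (∑ c2 : Fin m, (Polynomial.aeval lam)
              (if r.2 = c2 then
                (if r.1 = c1 then (-1 : Polynomial F)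
                 else if (c1 : ℕ) = (r.1 : ℕ) + 1 then Polynomial.X else 0)
               else 0) * w (c1, c2))
          = (if r.1 = c1 then (-1 : AlgebraicClosure F)
              else if (c1 : ℕ) = (r.1 : ℕ) + 1 then lam else 0) * w (c1, r.2) := by
        intro c1
        have e1 : ∀ c2 : Fin m, (Polynomial.aeval lam)
              (if r.2 = c2 then
                (if r.1 = c1 then (-1 : Polynomial F)
                 else if (c1 : ℕ) = (r.1 : ℕ) + 1 then Polynomial.X else 0)
               else 0) * w (c1, c2)
            = if r.2 = c2 then
                ((if r.1 = c1 then (-1 : AlgebraicClosure F)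
                  else if (c1 : ℕ) = (r.1 : ℕ) + 1 then lam else 0) * w (c1, c2)) else 0 := by
          intro c2
          by_cases h2 : r.2 = c2 <;>
            simp [h2, apply_ite (Polynomial.aeval lam)]
        rw [Finset.sum_congr rfl (fun c2 _ => e1 c2), Finset.sum_ite_eq]
        simp
      rw [Finset.sum_congr rfl (fun c1 _ => step c1)]
      exact csum (fun c1 => w (c1, r.2)) r.1
    rw [hC, hD]
    by_cases h : (r.1 : ℕ) + 1 < k - 1
    · rw [dif_pos h, dif_pos h, if_neg (by omega)]
      ring
    · rw [dif_neg h, dif_neg h, if_pos (by omega)]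
      ring
  -- top rows
  have topRow : ∀ (x : Fin m → AlgebraicClosure F) (i : Fin p),
      ((C1.map (fun q => Polynomial.aeval lam q)).mulVec
        (Sum.elim (fun rc : Fin (k-1) × Fin m => lam ^ (k-1-(rc.1 : ℕ)) * x rc.2) x))
        (Sum.inl i)
        = ((P.map (fun q => Polynomial.aeval lam q)).mulVec x) i := by
    intro x i
    rw [hC1, hP, Matrix.fromBlocks_map, Matrix.fromBlocks_mulVec]
    simp only [Sum.elim_inl, Pi.add_apply, Sum.elim_comp_inl, Sum.elim_comp_inr]
    set g : ℕ → AlgebraicClosure F :=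
      fun n => lam ^ n * ∑ j, algebraMap F (AlgebraicClosure F) (Pc n i j) * x j with hg
    have hR : (((∑ n ∈ Finset.range (k+1),
          ((Polynomial.X : Polynomial F) ^ n) • (Pc n).map Polynomial.C).map
          (fun q => Polynomial.aeval lam q)).mulVec x) i
        = ∑ n ∈ Finset.range (k+1), g n := by
      simp only [Matrix.mulVec, dotProduct, Matrix.map_apply, Matrix.sum_apply,
        Matrix.smul_apply, smul_eq_mul, map_sum, _root_.map_mul, map_pow, aeval_X, aeval_C]
      simp_rw [Finset.sum_mul]
      rw [Finset.sum_comm]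
      refine Finset.sum_congr rfl fun n _ => ?_
      simp only [hg, Finset.mul_sum]
      exact Finset.sum_congr rfl fun j _ => by ring
    have hpow : lam * lam ^ (k-1) = lam ^ k := by
      rw [← pow_succ']
      congr 1
      omega
    have hA : (((Matrix.of fun (i : Fin p) (c : Fin (k-1) × Fin m) =>
          if (c.1 : ℕ) = 0 then
            Polynomial.X * Polynomial.C (Pc k i c.2) + Polynomial.C (Pc (k-1) i c.2)
          else Polynomial.C (Pc (k-1-(c.1 : ℕ)) i c.2)).map
          (fun q => Polynomial.aeval lam q)).mulVec
          (fun rc : Fin (k-1) × Fin m => lam ^ (k-1-(rc.1 : ℕ)) * x rc.2)) i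
        = g k + ∑ t ∈ Finset.range (k-1), g (t+1) := by
      simp only [Matrix.mulVec, dotProduct, Matrix.map_apply, Matrix.of_apply]
      rw [Fintype.sum_prod_type]
      have step : ∀ c1 : Fin (k-1),
          (∑ c2 : Fin m, (Polynomial.aeval lam)
              (if (c1 : ℕ) = 0 then
                Polynomial.X * Polynomial.C (Pc k i c2) + Polynomial.C (Pc (k-1) i c2)
               else Polynomial.C (Pc (k-1-(c1 : ℕ)) i c2)) * (lam ^ (k-1-(c1 : ℕ)) * x c2))
          = (if (c1 : ℕ) = 0 then g k else 0) + g (k-1-(c1 : ℕ)) := by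
        intro c1
        by_cases h1 : (c1 : ℕ) = 0
        · simp only [h1, eq_self_iff_true, if_true, Nat.sub_zero, map_add, _root_.map_mul, aeval_X, aeval_C]
          have e1 : ∀ c2 : Fin m,
              (lam * algebraMap F (AlgebraicClosure F) (Pc k i c2)
                + algebraMap F (AlgebraicClosure F) (Pc (k-1) i c2)) * (lam ^ (k-1) * x c2)
              = lam ^ k * (algebraMap F (AlgebraicClosure F) (Pc k i c2) * x c2)
                + lam ^ (k-1) * (algebraMap F (AlgebraicClosure F) (Pc (k-1) i c2) * x c2) := by
            intro c2
            rw [← hpow]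
            ring
          rw [Finset.sum_congr rfl (fun c2 _ => e1 c2), Finset.sum_add_distrib,
            ← Finset.mul_sum, ← Finset.mul_sum]
        · simp only [h1, if_false, aeval_C]
          have e2 : ∀ c2 : Fin m,
              algebraMap F (AlgebraicClosure F) (Pc (k-1-(c1 : ℕ)) i c2)
                * (lam ^ (k-1-(c1 : ℕ)) * x c2)
              = lam ^ (k-1-(c1 : ℕ))
                * (algebraMap F (AlgebraicClosure F) (Pc (k-1-(c1 : ℕ)) i c2) * x c2) := by
            intro c2
            ring
          rw [Finset.sum_congr rfl (fun c2 _ => e2 c2), ← Finset.mul_sum, zero_add]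
      rw [Finset.sum_congr rfl (fun c1 _ => step c1), Finset.sum_add_distrib]
      congr 1
      · rw [Fin.sum_univ_eq_sum_range (fun t => if t = 0 then g k else 0) (k-1),
          Finset.sum_ite_eq']
        rw [if_pos (Finset.mem_range.mpr (by omega))]
      · rw [Fin.sum_univ_eq_sum_range (fun t => g (k-1-t)) (k-1),
          ← Finset.sum_range_reflect (fun j => g (j+1)) (k-1)]
        refine Finset.sum_congr rfl fun j hj => ?_
        have := Finset.mem_range.mp hj
        congr 1
        omega
    have hB : ((((Pc 0).map Polynomial.C).map (fun q => Polynomial.aeval lam q)).mulVec x) i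
        = g 0 := by
      simp only [Matrix.mulVec, dotProduct, Matrix.map_apply, aeval_C, hg,
        pow_zero, one_mul]
    rw [hA, hB, hR, Finset.sum_range_succ']
    have hsplit : (∑ t ∈ Finset.range k, g (t+1))
        = (∑ t ∈ Finset.range (k-1), g (t+1)) + g k := by
      conv_lhs => rw [show k = (k-1)+1 from by omega]
      rw [Finset.sum_range_succ, show k-1+1 = k from by omega]
    rw [hsplit]
    ring
  constructor
  · -- MapsTo
    intro x hx
    simp only [Set.mem_setOf_eq] at hx ⊢
    funext s
    cases s with
    | inl i =>
      rw [topRow x i, hx]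
      rfl
    | inr r =>
      rw [bottomRow _ _ r]
      have hlt := r.1.isLt
      by_cases h : (r.1 : ℕ) + 1 < k - 1
      · rw [dif_pos h]
        show -(lam ^ (k-1-(r.1 : ℕ)) * x r.2) + lam * (lam ^ (k-1-((r.1 : ℕ)+1)) * x r.2) = 0
        rw [show k-1-(r.1 : ℕ) = (k-1-((r.1 : ℕ)+1))+1 from by omega, pow_succ']
        ring
      · rw [dif_neg h]
        show -(lam ^ (k-1-(r.1 : ℕ)) * x r.2) + lam * x r.2 = 0
        rw [show k-1-(r.1 : ℕ) = 1 from by omega, pow_one]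
        ring
  constructor
  · -- InjOn
    intro x _ x' _ h
    funext j
    exact congrFun h (Sum.inr j)
  · -- SurjOn
    intro v hv
    simp only [Set.mem_setOf_eq] at hv
    set w : Fin (k-1) × Fin m → AlgebraicClosure F := fun rc => v (Sum.inl rc) with hwdef
    set y : Fin m → AlgebraicClosure F := fun j => v (Sum.inr j) with hydef
    have hveq : v = Sum.elim w y := by
      funext s; cases s <;> rfl
    have hbot : ∀ r : Fin (k-1) × Fin m,
        -(w r) + lam *
          (if h : (r.1 : ℕ) + 1 < k - 1 then w (⟨(r.1 : ℕ) + 1, h⟩, r.2) else y r.2) = 0 := by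
      intro r
      rw [← bottomRow w y r, ← hveq, hv]
      rfl
    have hw : ∀ r : Fin (k-1) × Fin m, w r = lam ^ (k-1-(r.1 : ℕ)) * y r.2 := by
      have key : ∀ d : ℕ, ∀ r : Fin (k-1) × Fin m, k - 2 - (r.1 : ℕ) = d →
          w r = lam ^ (k-1-(r.1 : ℕ)) * y r.2 := by
        intro d
        induction d with
        | zero =>
          intro r hr
          have hlt := r.1.isLt
          have h : ¬((r.1 : ℕ) + 1 < k - 1) := by omega
          have hb := hbot r
          rw [dif_neg h] at hb
          rw [show k-1-(r.1 : ℕ) = 1 from by omega, pow_one]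
          linear_combination -hb
        | succ n ih =>
          intro r hr
          have hlt := r.1.isLt
          have h : (r.1 : ℕ) + 1 < k - 1 := by omega
          have hb := hbot r
          rw [dif_pos h] at hb
          have ihv : w (⟨(r.1 : ℕ) + 1, h⟩, r.2) = lam ^ (k-1-((r.1 : ℕ)+1)) * y r.2 :=
            ih (⟨(r.1 : ℕ) + 1, h⟩, r.2) (by show k - 2 - ((r.1 : ℕ)+1) = n; omega)
          rw [ihv] at hb
          rw [show k-1-(r.1 : ℕ) = (k-1-((r.1 : ℕ)+1))+1 from by omega, pow_succ']
          linear_combination -hb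
      exact fun r => key _ r rfl
    have himg : Sum.elim (fun rc : Fin (k-1) × Fin m => lam ^ (k-1-(rc.1 : ℕ)) * y rc.2) y
        = v := by
      funext s
      cases s with
      | inl rc => exact (hw rc).symm
      | inr j => rfl
    refine ⟨y, ?_, himg⟩
    simp only [Set.mem_setOf_eq]
    funext i
    rw [← topRow y i, himg, hv]
    rfl
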